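/- Let a > 0, b > 0 and let γ be Gamma-distributed with shape b and rate a. Then lim_{p→∞} ( - log E[Q(√(p γ))] / log p ) = b. -/

import Mathlib

open MeasureTheory Real Filter
open scoped ENNReal

/-- The Gaussian Q-function. -/
noncomputable def gaussQ (x : ℝ) : ℝ :=
  (Real.sqrt (2 * Real.pi))⁻¹ * ∫ t in Set.Ioi x, Real.exp (-t ^ 2 / 2)

lemma aux_integrable_half : Integrable (fun t : ℝ => Real.exp (-t ^ 2 / 2)) := by
  have h := integrable_exp_neg_mul_sq (by norm_num : (0:ℝ) < 1/2)
  refine h.congr ?_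
  filter_upwards with t
  congr 1; ring

lemma aux_integrable_quarter : Integrable (fun t : ℝ => Real.exp (-t ^ 2 / 4)) := by
  have h := integrable_exp_neg_mul_sq (by norm_num : (0:ℝ) < 1/4)
  refine h.congr ?_
  filter_upwards with t
  congr 1; ring

lemma gaussQ_pos (x : ℝ) : 0 < gaussQ x := by
  have hpi : (0:ℝ) < 2 * Real.pi := by positivity
  have hc : 0 < (Real.sqrt (2 * Real.pi))⁻¹ := by positivity
  refine mul_pos hc ?_
  rw [setIntegral_pos_iff_support_of_nonneg_ae
      (Filter.Eventually.of_forall fun t => (Real.exp_pos _).le)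
      aux_integrable_half.integrableOn]
  have hs : Function.support (fun t : ℝ => Real.exp (-t ^ 2 / 2)) = Set.univ := by
    ext t; simp [Function.mem_support, (Real.exp_pos (-t ^ 2 / 2)).ne']
  simp [hs, Real.volume_Ioi]

lemma gaussQ_antitone : Antitone gaussQ := by
  intro x y hxy
  unfold gaussQ
  refine mul_le_mul_of_nonneg_left ?_ (by positivity)
  refine setIntegral_mono_set aux_integrable_half.integrableOn
    (Filter.Eventually.of_forall fun t => (Real.exp_pos _).le) ?_
  exact HasSubset.Subset.eventuallyLE (Set.Ioi_subset_Ioi hxy)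

lemma gaussQ_le {x : ℝ} (hx : 0 ≤ x) : gaussQ x ≤ 2 * Real.exp (-x ^ 2 / 4) := by
  have hπ : (0:ℝ) < Real.pi := Real.pi_pos
  have h1 : (∫ t in Set.Ioi x, Real.exp (-t ^ 2 / 2)) ≤
      ∫ t in Set.Ioi x, Real.exp (-x ^ 2 / 4) * Real.exp (-t ^ 2 / 4) := by
    refine setIntegral_mono_on aux_integrable_half.integrableOn
      ((aux_integrable_quarter.const_mul _).integrableOn) measurableSet_Ioi ?_
    intro t ht
    rw [← Real.exp_add]
    apply Real.exp_le_exp.mpr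
    have hxt : x ≤ t := le_of_lt ht
    nlinarith
  have h2 : (∫ t in Set.Ioi x, Real.exp (-x ^ 2 / 4) * Real.exp (-t ^ 2 / 4)) =
      Real.exp (-x ^ 2 / 4) * ∫ t in Set.Ioi x, Real.exp (-t ^ 2 / 4) :=
    integral_const_mul _ _
  have h3 : (∫ t in Set.Ioi x, Real.exp (-t ^ 2 / 4)) ≤ ∫ t : ℝ, Real.exp (-t ^ 2 / 4) :=
    setIntegral_le_integral aux_integrable_quarter
      (Filter.Eventually.of_forall fun t => (Real.exp_pos _).le)
  have h4 : (∫ t : ℝ, Real.exp (-t ^ 2 / 4)) = Real.sqrt (Real.pi / (1/4)) := by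
    rw [← integral_gaussian]
    congr 1 with t
    congr 1; ring
  have hcs : (Real.sqrt (2 * Real.pi))⁻¹ * Real.sqrt (Real.pi / (1/4)) ≤ 2 := by
    rw [inv_mul_le_iff₀ (by positivity)]
    have h5 : Real.sqrt (Real.pi / (1/4)) ≤ Real.sqrt (4 * (2 * Real.pi)) := by
      apply Real.sqrt_le_sqrt; nlinarith
    have h6 : Real.sqrt (4 * (2 * Real.pi)) = 2 * Real.sqrt (2 * Real.pi) := by
      rw [Real.sqrt_mul (by norm_num), show (4:ℝ) = 2^2 by norm_num,
        Real.sqrt_sq (by norm_num)]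
    calc Real.sqrt (Real.pi / (1/4)) ≤ 2 * Real.sqrt (2 * Real.pi) := h5.trans_eq h6
      _ = Real.sqrt (2 * Real.pi) * 2 := by ring
  have hnn : (0:ℝ) ≤ (Real.sqrt (2 * Real.pi))⁻¹ := by positivity
  calc gaussQ x
      = (Real.sqrt (2 * Real.pi))⁻¹ * ∫ t in Set.Ioi x, Real.exp (-t ^ 2 / 2) := rfl
    _ ≤ (Real.sqrt (2 * Real.pi))⁻¹ * (Real.exp (-x ^ 2 / 4) * Real.sqrt (Real.pi / (1/4))) := by
        refine mul_le_mul_of_nonneg_left ?_ hnn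
        calc (∫ t in Set.Ioi x, Real.exp (-t ^ 2 / 2))
            ≤ Real.exp (-x ^ 2 / 4) * ∫ t in Set.Ioi x, Real.exp (-t ^ 2 / 4) := h1.trans_eq h2
          _ ≤ Real.exp (-x ^ 2 / 4) * ∫ t : ℝ, Real.exp (-t ^ 2 / 4) :=
              mul_le_mul_of_nonneg_left h3 (Real.exp_pos _).le
          _ = Real.exp (-x ^ 2 / 4) * Real.sqrt (Real.pi / (1/4)) := by rw [h4]
    _ = ((Real.sqrt (2 * Real.pi))⁻¹ * Real.sqrt (Real.pi / (1/4))) * Real.exp (-x ^ 2 / 4) := by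
        ring
    _ ≤ 2 * Real.exp (-x ^ 2 / 4) := mul_le_mul_of_nonneg_right hcs (Real.exp_pos _).le

noncomputable def jint (a b p y : ℝ) : ℝ :=
  gaussQ (Real.sqrt y) * (a ^ b * y ^ (b - 1) * Real.exp (-(a * (y / p))) / Real.Gamma b)

noncomputable def jdom (a b y : ℝ) : ℝ :=
  2 * Real.exp (-y / 4) * (a ^ b * y ^ (b - 1) / Real.Gamma b)

lemma jdom_integrableOn {b : ℝ} (a : ℝ) (hb : 0 < b) :
    IntegrableOn (jdom a b) (Set.Ioi 0) := by
  have h0 : IntegrableOn (fun y : ℝ => y ^ (b - 1) * Real.exp (-(4⁻¹) * y ^ (1:ℝ)))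
      (Set.Ioi 0) :=
    integrableOn_rpow_mul_exp_neg_mul_rpow (by linarith) one_pos (by norm_num)
  have h1 : IntegrableOn
      (fun y : ℝ => (2 * a ^ b / Real.Gamma b) * (y ^ (b - 1) * Real.exp (-(4⁻¹) * y ^ (1:ℝ))))
      (Set.Ioi 0) := h0.const_mul (2 * a ^ b / Real.Gamma b)
  refine h1.congr_fun (fun y hy => ?_) measurableSet_Ioi
  unfold jdom
  beta_reduce
  rw [Real.rpow_one, show -(4⁻¹:ℝ) * y = -y / 4 by ring]
  ring

lemma jint_meas (a b p : ℝ) :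
    AEStronglyMeasurable (jint a b p) (volume.restrict (Set.Ioi 0)) := by
  apply Measurable.aestronglyMeasurable
  exact (gaussQ_antitone.measurable.comp Real.continuous_sqrt.measurable).mul (by fun_prop)

lemma jint_pos {a b p y : ℝ} (ha : 0 < a) (hb : 0 < b) (hy : 0 < y) :
    0 < jint a b p y := by
  unfold jint
  have h1 := gaussQ_pos (Real.sqrt y)
  have h2 : 0 < Real.Gamma b := Real.Gamma_pos_of_pos hb
  have h3 : (0:ℝ) < a ^ b := Real.rpow_pos_of_pos ha b
  have h4 : (0:ℝ) < y ^ (b - 1) := Real.rpow_pos_of_pos hy _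
  have h5 := Real.exp_pos (-(a * (y / p)))
  positivity

lemma jint_le_jdom {a b p y : ℝ} (ha : 0 < a) (hb : 0 < b) (hp : 0 < p) (hy : 0 < y) :
    jint a b p y ≤ jdom a b y := by
  unfold jint jdom
  have hΓ : 0 < Real.Gamma b := Real.Gamma_pos_of_pos hb
  have h1 : gaussQ (Real.sqrt y) ≤ 2 * Real.exp (-y / 4) := by
    have := gaussQ_le (Real.sqrt_nonneg y)
    rwa [Real.sq_sqrt hy.le] at this
  have h2 : Real.exp (-(a * (y / p))) ≤ 1 := by
    rw [Real.exp_le_one_iff]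
    have : 0 ≤ a * (y / p) := by positivity
    linarith
  have h3 : (0:ℝ) ≤ a ^ b * y ^ (b - 1) :=
    mul_nonneg (Real.rpow_nonneg ha.le b) (Real.rpow_nonneg hy.le _)
  have h4 : a ^ b * y ^ (b - 1) * Real.exp (-(a * (y / p))) / Real.Gamma b ≤
      a ^ b * y ^ (b - 1) / Real.Gamma b :=
    (div_le_div_iff_of_pos_right hΓ).mpr (mul_le_of_le_one_right h3 h2)
  calc gaussQ (Real.sqrt y) * (a ^ b * y ^ (b - 1) * Real.exp (-(a * (y / p))) / Real.Gamma b)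
      ≤ (2 * Real.exp (-y / 4)) *
        (a ^ b * y ^ (b - 1) * Real.exp (-(a * (y / p))) / Real.Gamma b) :=
        mul_le_mul_of_nonneg_right h1 (by positivity)
    _ ≤ (2 * Real.exp (-y / 4)) * (a ^ b * y ^ (b - 1) / Real.Gamma b) :=
        mul_le_mul_of_nonneg_left h4 (by positivity)

lemma jint_integrableOn {a b p : ℝ} (ha : 0 < a) (hb : 0 < b) (hp : 0 < p) :
    IntegrableOn (jint a b p) (Set.Ioi 0) := by
  refine (jdom_integrableOn a hb).mono' (jint_meas a b p) ?_
  filter_upwards [self_mem_ae_restrict measurableSet_Ioi] with y hy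
  rw [Real.norm_eq_abs, abs_of_nonneg (jint_pos ha hb hy).le]
  exact jint_le_jdom ha hb hp hy

theorem stmt14 (a b : ℝ) (ha : 0 < a) (hb : 0 < b) :
    Tendsto
      (fun p : ℝ =>
        -Real.log (∫ x in Set.Ioi (0 : ℝ),
            gaussQ (Real.sqrt (p * x)) *
              (a ^ b * x ^ (b - 1) * Real.exp (-(a * x)) / Real.Gamma b)) / Real.log p)
      atTop (nhds b) := by
  have hΓ : 0 < Real.Gamma b := Real.Gamma_pos_of_pos hb
  set J : ℝ → ℝ := fun p => ∫ y in Set.Ioi (0:ℝ), jint a b p y with hJdef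
  set K : ℝ := ∫ y in Set.Ioi (0:ℝ), jdom a b y with hKdef
  -- positivity of J 1
  have hJ1 : 0 < J 1 := by
    rw [hJdef]
    simp only
    rw [setIntegral_pos_iff_support_of_nonneg_ae ?hnn (jint_integrableOn ha hb one_pos)]
    case hnn =>
      filter_upwards [self_mem_ae_restrict measurableSet_Ioi] with y hy
      exact (jint_pos ha hb hy).le
    have hsub : Set.Ioi (0:ℝ) ⊆ Function.support (jint a b 1) := fun y hy =>
      (jint_pos ha hb hy).ne'
    calc (0:ℝ≥0∞) < volume (Set.Ioi (0:ℝ)) := by simp [Real.volume_Ioi]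
      _ ≤ volume (Function.support (jint a b 1) ∩ Set.Ioi 0) :=
          measure_mono (Set.subset_inter hsub (le_refl _))
  -- monotonicity
  have hJmono : ∀ p : ℝ, 1 ≤ p → J 1 ≤ J p := by
    intro p hp
    have hp0 : (0:ℝ) < p := lt_of_lt_of_le one_pos hp
    refine setIntegral_mono_on (jint_integrableOn ha hb one_pos)
      (jint_integrableOn ha hb hp0) measurableSet_Ioi ?_
    intro y hy
    unfold jint
    have hy0 : (0:ℝ) < y := hy
    have hdiv : y / p ≤ y / 1 := div_le_div_of_nonneg_left hy0.le one_pos hp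
    have hexp : Real.exp (-(a * (y / 1))) ≤ Real.exp (-(a * (y / p))) := by
      apply Real.exp_le_exp.mpr
      nlinarith [mul_le_mul_of_nonneg_left hdiv ha.le]
    have hnn : (0:ℝ) ≤ a ^ b * y ^ (b - 1) :=
      mul_nonneg (Real.rpow_nonneg ha.le b) (Real.rpow_nonneg hy0.le _)
    refine mul_le_mul_of_nonneg_left ?_ (gaussQ_pos _).le
    exact (div_le_div_iff_of_pos_right hΓ).mpr (mul_le_mul_of_nonneg_left hexp hnn)
  -- upper bound
  have hJK : ∀ p : ℝ, 0 < p → J p ≤ K := by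
    intro p hp
    refine setIntegral_mono_on (jint_integrableOn ha hb hp)
      (jdom_integrableOn a hb) measurableSet_Ioi ?_
    intro y hy
    exact jint_le_jdom ha hb hp hy
  have hJp_pos : ∀ p : ℝ, 1 ≤ p → 0 < J p := fun p hp => lt_of_lt_of_le hJ1 (hJmono p hp)
  have hK_pos : 0 < K := lt_of_lt_of_le hJ1 ((hJmono 1 le_rfl).trans (hJK 1 one_pos))
  -- change of variables
  have hIp : ∀ p : ℝ, 0 < p →
      (∫ x in Set.Ioi (0:ℝ), gaussQ (Real.sqrt (p * x)) *
        (a ^ b * x ^ (b - 1) * Real.exp (-(a * x)) / Real.Gamma b)) = p ^ (-b) * J p := by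
    intro p hp
    set G : ℝ → ℝ := fun y => gaussQ (Real.sqrt y) *
      (a ^ b * (y / p) ^ (b - 1) * Real.exp (-(a * (y / p))) / Real.Gamma b) with hGdef
    have h1 : (∫ x in Set.Ioi (0:ℝ), gaussQ (Real.sqrt (p * x)) *
        (a ^ b * x ^ (b - 1) * Real.exp (-(a * x)) / Real.Gamma b)) =
        ∫ x in Set.Ioi (0:ℝ), G (p * x) := by
      refine setIntegral_congr_fun measurableSet_Ioi (fun x _ => ?_)
      rw [hGdef]
      simp only
      rw [mul_div_cancel_left₀ x hp.ne']
    have h2 := MeasureTheory.integral_comp_mul_left_Ioi G 0 hp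
    rw [mul_zero] at h2
    have h3 : (∫ y in Set.Ioi (0:ℝ), G y) = p ^ (-(b-1)) * J p := by
      rw [hJdef]
      simp only
      rw [← integral_const_mul]
      refine setIntegral_congr_fun measurableSet_Ioi (fun y hy => ?_)
      have hy0 : (0:ℝ) < y := hy
      rw [hGdef]
      simp only
      unfold jint
      rw [Real.div_rpow hy0.le hp.le, Real.rpow_neg hp.le]
      field_simp
    rw [h1, h2, h3, smul_eq_mul, ← Real.rpow_neg_one p, ← mul_assoc, ← Real.rpow_add hp,
      show (-1 : ℝ) + -(b-1) = -b by ring]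
  -- eventual equality
  have heq : ∀ᶠ p in atTop, (-Real.log (∫ x in Set.Ioi (0:ℝ),
      gaussQ (Real.sqrt (p * x)) * (a ^ b * x ^ (b - 1) * Real.exp (-(a * x)) / Real.Gamma b))
        / Real.log p) = b - Real.log (J p) / Real.log p := by
    filter_upwards [eventually_ge_atTop (2:ℝ)] with p hp
    have hp0 : (0:ℝ) < p := by linarith
    have hp1 : (1:ℝ) ≤ p := by linarith
    have hlogp : 0 < Real.log p := Real.log_pos (by linarith)
    rw [hIp p hp0, Real.log_mul (Real.rpow_pos_of_pos hp0 _).ne' (hJp_pos p hp1).ne',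
      Real.log_rpow hp0]
    field_simp
    ring
  rw [tendsto_congr' heq]
  have hlim : Tendsto (fun p : ℝ => Real.log (J p) / Real.log p) atTop (nhds 0) := by
    set M : ℝ := max |Real.log (J 1)| |Real.log K| with hMdef
    have hbound : ∀ᶠ p in atTop, ‖Real.log (J p) / Real.log p‖ ≤ M * (Real.log p)⁻¹ := by
      filter_upwards [eventually_ge_atTop (2:ℝ)] with p hp
      have hp0 : (0:ℝ) < p := by linarith
      have hp1 : (1:ℝ) ≤ p := by linarith
      have hlogp : 0 < Real.log p := Real.log_pos (by linarith)
      have habs : |Real.log (J p)| ≤ M := by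
        rw [abs_le]
        constructor
        · have h1 : Real.log (J 1) ≤ Real.log (J p) :=
            Real.log_le_log hJ1 (hJmono p hp1)
          have h2 : -M ≤ Real.log (J 1) := by
            have := neg_abs_le (Real.log (J 1))
            have := le_max_left |Real.log (J 1)| |Real.log K|
            linarith
          linarith
        · have h1 : Real.log (J p) ≤ Real.log K :=
            Real.log_le_log (hJp_pos p hp1) (hJK p hp0)
          have h2 : Real.log K ≤ M := by
            have := le_abs_self (Real.log K)
            have := le_max_right |Real.log (J 1)| |Real.log K|
            linarith
          linarith
      rw [norm_div, Real.norm_eq_abs, Real.norm_eq_abs, abs_of_pos hlogp, div_eq_mul_inv]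
      exact mul_le_mul_of_nonneg_right habs (by positivity)
    have hg : Tendsto (fun p : ℝ => M * (Real.log p)⁻¹) atTop (nhds 0) := by
      have := Real.tendsto_log_atTop.inv_tendsto_atTop
      simpa using this.const_mul M
    exact squeeze_zero_norm' hbound hg
  have hfinal : Tendsto (fun p : ℝ => b - Real.log (J p) / Real.log p) atTop (nhds (b - 0)) :=
    Tendsto.sub tendsto_const_nhds hlim
  simpa using hfinal
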